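/- Define sequences (pₙ), (qₙ) by p₀ = √2, q₀ = 1, pₙ₊₁ = (pₙ + qₙ)/2, qₙ₊₁ = √(pₙ·qₙ), and let M(1, √2) denote their common limit. Then the quarter-arclength integral of the lemniscate satisfies ∫₀¹ dt/√(1 − t⁴) = π / (2·M(1, √2)). -/

import Mathlib

open Filter
open MeasureTheory Set


lemma lintegral_image_deriv {s : Set ℝ} {f f' : ℝ → ℝ} (hs : MeasurableSet s)
    (hf' : ∀ x ∈ s, HasDerivWithinAt f (f' x) s x) (hf : InjOn f s) (g : ℝ → ENNReal) :
    ∫⁻ x in f '' s, g x = ∫⁻ x in s, ENNReal.ofReal |f' x| * g (f x) := by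
  simpa only [ContinuousLinearMap.det_toSpanSingleton] using
    lintegral_image_eq_lintegral_abs_det_fderiv_mul volume hs
      (fun x hx => (hf' x hx).hasFDerivWithinAt) hf g

noncomputable def Fg (a b x : ℝ) : ℝ := 1 / Real.sqrt ((x^2 + a^2) * (x^2 + b^2))

noncomputable def Kg (a b : ℝ) : ENNReal := ∫⁻ x in Ioi (0:ℝ), ENNReal.ofReal (Fg a b x)

lemma measurable_Fg (a b : ℝ) : Measurable fun x => ENNReal.ofReal (Fg a b x) := by
  unfold Fg
  exact (measurable_const.div ((((measurable_id.pow_const 2).add_const _).mul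
    ((measurable_id.pow_const 2).add_const _)).sqrt)).ennreal_ofReal

lemma integrable_inv_sq_add (a : ℝ) (ha : 0 < a) :
    IntegrableOn (fun x => (x^2 + a^2)⁻¹) (Ioi (0:ℝ)) := by
  have hmin : 0 < min 1 (a^2) := lt_min one_pos (by positivity)
  have h : IntegrableOn (fun x => (min 1 (a^2))⁻¹ * (1 + x^2)⁻¹) (Ioi (0:ℝ)) :=
    (integrable_inv_one_add_sq.const_mul _).integrableOn
  refine h.mono' ((((measurable_id.pow_const 2).add_const _).inv).aestronglyMeasurable) ?_
  filter_upwards with x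
  rw [Real.norm_eq_abs, abs_of_nonneg (by positivity)]
  rw [← mul_inv]
  apply inv_anti₀ (by positivity)
  rcases le_total 1 (a^2) with h | h
  · rw [min_eq_left h]; nlinarith [sq_nonneg x]
  · rw [min_eq_right h]; nlinarith [sq_nonneg x, sq_nonneg a]

lemma integral_inv_sq_add (a : ℝ) (ha : 0 < a) :
    ∫ x in Ioi (0:ℝ), (x^2 + a^2)⁻¹ = Real.pi / (2 * a) := by
  have key : ∀ x : ℝ, HasDerivAt (fun x => a⁻¹ * Real.arctan (x / a)) ((x^2 + a^2)⁻¹) x := by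
    intro x
    have h1 : HasDerivAt (fun x : ℝ => x / a) (1/a) x := (hasDerivAt_id x).div_const a
    have h2 := (Real.hasDerivAt_arctan (x / a)).comp x h1
    have h3 := h2.const_mul a⁻¹
    refine h3.congr_deriv ?_
    have hx : 1 + (x/a)^2 = (x^2 + a^2)/a^2 := by field_simp; ring
    rw [hx]
    field_simp
  have hT : Tendsto (fun x => a⁻¹ * Real.arctan (x / a)) atTop (nhds (a⁻¹ * (Real.pi/2))) := by
    have h1 : Tendsto (fun x : ℝ => x / a) atTop atTop := tendsto_id.atTop_div_const ha
    exact (tendsto_nhds_of_tendsto_nhdsWithin (Real.tendsto_arctan_atTop.comp h1)).const_mul a⁻¹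
  have heq := integral_Ioi_of_hasDerivAt_of_tendsto' (f := fun x => a⁻¹ * Real.arctan (x / a))
    (fun x _ => key x) (integrable_inv_sq_add a ha) hT
  rw [heq]
  simp [Real.arctan_zero]
  ring

lemma lintegral_inv_sq_add (a : ℝ) (ha : 0 < a) :
    ∫⁻ x in Ioi (0:ℝ), ENNReal.ofReal ((x^2 + a^2)⁻¹) = ENNReal.ofReal (Real.pi / (2 * a)) := by
  rw [← integral_inv_sq_add a ha, ← ofReal_integral_eq_lintegral_ofReal
    (integrable_inv_sq_add a ha) (Filter.Eventually.of_forall fun x => by positivity)]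

lemma Kg_le (a b : ℝ) (hb : 0 < b) (hba : b ≤ a) :
    Kg a b ≤ ENNReal.ofReal (Real.pi / (2 * b)) := by
  rw [← lintegral_inv_sq_add b hb]
  apply setLIntegral_mono ((((measurable_id.pow_const 2).add_const _).inv).ennreal_ofReal)
  intro x _
  apply ENNReal.ofReal_le_ofReal
  unfold Fg
  rw [one_div]
  apply inv_anti₀ (by positivity)
  calc x^2 + b^2 = Real.sqrt ((x^2 + b^2)^2) := (Real.sqrt_sq (by positivity)).symm
    _ ≤ Real.sqrt ((x^2 + a^2) * (x^2 + b^2)) :=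
        Real.sqrt_le_sqrt (by nlinarith [sq_nonneg x, hb.le, hba, mul_le_mul hba hba hb.le (hb.le.trans hba)])

lemma le_Kg (a b : ℝ) (hb : 0 < b) (hba : b ≤ a) :
    ENNReal.ofReal (Real.pi / (2 * a)) ≤ Kg a b := by
  have ha : 0 < a := lt_of_lt_of_le hb hba
  rw [← lintegral_inv_sq_add a ha]
  apply setLIntegral_mono (measurable_Fg a b)
  intro x _
  apply ENNReal.ofReal_le_ofReal
  unfold Fg
  rw [one_div]
  apply inv_anti₀ (Real.sqrt_pos.mpr (by positivity))
  calc Real.sqrt ((x^2 + a^2) * (x^2 + b^2)) ≤ Real.sqrt ((x^2 + a^2)^2) :=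
        Real.sqrt_le_sqrt (by nlinarith [sq_nonneg x, hb.le, hba, mul_le_mul hba hba hb.le (hb.le.trans hba)])
    _ = x^2 + a^2 := Real.sqrt_sq (by positivity)

lemma Fg_even (a b x : ℝ) : Fg a b (-x) = Fg a b x := by unfold Fg; rw [neg_pow]; ring_nf

lemma lintegral_univ_eq_two_mul (g : ℝ → ENNReal) (hg : Measurable g)
    (heven : ∀ x, g (-x) = g x) :
    ∫⁻ x, g x = 2 * ∫⁻ x in Ioi (0:ℝ), g x := by
  have h1 : ∫⁻ x, g x = (∫⁻ x in Ioi (0:ℝ), g x) + ∫⁻ x in Iic (0:ℝ), g x := by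
    rw [← lintegral_add_compl g (measurableSet_Ioi (a := (0:ℝ)))]
    congr 1
    apply setLIntegral_congr
    rw [compl_Ioi]
    rfl
  have h2 : ∫⁻ x in Iic (0:ℝ), g x = ∫⁻ x in Iio (0:ℝ), g x :=
    setLIntegral_congr Iio_ae_eq_Iic.symm
  have h3 : ∫⁻ x in Iio (0:ℝ), g x = ∫⁻ x in Ioi (0:ℝ), g x := by
    have hmp : MeasurePreserving (fun x : ℝ => -x) volume volume := Measure.measurePreserving_neg _
    have hemb : MeasurableEmbedding (fun x : ℝ => -x) :=
      (Homeomorph.neg ℝ).measurableEmbedding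
    have := hmp.setLIntegral_comp_preimage_emb hemb g (Iio (0:ℝ))
    have hpre : (fun x : ℝ => -x) ⁻¹' (Iio 0) = Ioi 0 := by ext y; simp
    rw [hpre] at this
    rw [← this]
    simp [heven]
  rw [h1, h2, h3, two_mul]

lemma Kg_step (a b : ℝ) (ha : 0 < a) (hb : 0 < b) :
    Kg ((a+b)/2) (Real.sqrt (a*b)) = Kg a b := by
  set c := a * b with hc
  have hcpos : 0 < c := mul_pos ha hb
  set f : ℝ → ℝ := fun x => (x - c/x)/2 with hf
  set f' : ℝ → ℝ := fun x => (1 + c/x^2)/2 with hf'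
  have hder : ∀ x ∈ Ioi (0:ℝ), HasDerivWithinAt f (f' x) (Ioi 0) x := by
    intro x hx
    have hx0 : x ≠ 0 := ne_of_gt hx
    have h1 : HasDerivAt (fun y : ℝ => (y - c/y)/2) ((1 - c * (-(x^2)⁻¹))/2) x := by
      have := ((hasDerivAt_id x).sub ((hasDerivAt_inv hx0).const_mul c)).div_const 2
      exact this
    have h2 : (1 - c * (-(x^2)⁻¹)) / 2 = f' x := by rw [hf']; field_simp; ring
    exact (h2 ▸ h1).hasDerivWithinAt
  have hinj : InjOn f (Ioi (0:ℝ)) := by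
    intro x hx y hy hxy
    simp only [mem_Ioi] at hx hy
    have hx0 : x ≠ 0 := ne_of_gt hx
    have hy0 : y ≠ 0 := ne_of_gt hy
    rw [hf] at hxy
    field_simp at hxy
    nlinarith [mul_pos hx hy, hxy]
  have himg : f '' Ioi (0:ℝ) = univ := by
    apply eq_univ_of_forall
    intro y
    have hsq : 0 ≤ y^2 + c := by positivity
    set s := Real.sqrt (y^2 + c) with hs
    have hs2 : s^2 = y^2 + c := Real.sq_sqrt hsq
    have hsn : 0 ≤ s := Real.sqrt_nonneg _
    have hxpos : 0 < y + s := by nlinarith [hs2, hsn, hcpos, sq_nonneg (s + y)]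
    refine ⟨y + s, hxpos, ?_⟩
    rw [hf]
    have hne : y + s ≠ 0 := ne_of_gt hxpos
    field_simp
    nlinarith [hs2]
  -- pointwise identity
  set a1 := (a+b)/2 with ha1
  set b1 := Real.sqrt (a*b) with hb1
  have hb12 : b1^2 = c := Real.sq_sqrt hcpos.le
  have hpt : ∀ x ∈ Ioi (0:ℝ),
      ENNReal.ofReal |f' x| * ENNReal.ofReal (Fg a1 b1 (f x)) = 2 * ENNReal.ofReal (Fg a b x) := by
    intro x hx
    have hx0 : (0:ℝ) < x := hx
    set S := Real.sqrt ((x^2 + a^2) * (x^2 + b^2)) with hSd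
    have hS2 : S^2 = (x^2 + a^2) * (x^2 + b^2) := Real.sq_sqrt (by positivity)
    have hSpos : 0 < S := Real.sqrt_pos.mpr (by positivity)
    have hx0' : x ≠ 0 := ne_of_gt hx0
    have e1 : f x ^ 2 + a1^2 = (x^2+a^2)*(x^2+b^2)/(4*x^2) := by
      simp only [hf, ha1, hc]; field_simp; ring
    have e2 : f x ^ 2 + b1^2 = (x^2+c)^2/(4*x^2) := by
      simp only [hf, hb12, hc]; field_simp; ring
    have hprod : (f x ^ 2 + a1^2) * (f x ^ 2 + b1^2) = (S * (x^2 + c) / (4 * x^2))^2 := by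
      rw [e1, e2, div_pow, mul_pow, hS2]
      ring
    have hFg1 : Fg a1 b1 (f x) = 4 * x^2 / (S * (x^2 + c)) := by
      rw [Fg, hprod, Real.sqrt_sq (by positivity)]
      field_simp
    have hfp : f' x = (x^2 + c)/(2 * x^2) := by
      simp only [hf']; field_simp
    have habs : |f' x| = (x^2 + c)/(2 * x^2) := by rw [hfp]; exact abs_of_pos (by positivity)
    rw [habs, hFg1, ← ENNReal.ofReal_mul (by positivity), Fg]
    rw [show ((2:ENNReal) = ENNReal.ofReal (2:ℝ)) from (ENNReal.ofReal_ofNat 2).symm,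
      ← ENNReal.ofReal_mul (by norm_num)]
    congr 1
    rw [← hSd]
    field_simp
    ring
  -- change of variables
  have hcv := lintegral_image_deriv measurableSet_Ioi hder hinj
      (fun x => ENNReal.ofReal (Fg a1 b1 x))
  rw [himg] at hcv
  have heven := lintegral_univ_eq_two_mul (fun x => ENNReal.ofReal (Fg a1 b1 x))
      (measurable_Fg a1 b1) (fun x => by simp only [Fg_even])
  rw [Measure.restrict_univ] at hcv
  have hrhs : ∫⁻ x in Ioi (0:ℝ), ENNReal.ofReal |f' x| * ENNReal.ofReal (Fg a1 b1 (f x))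
      = 2 * ∫⁻ x in Ioi (0:ℝ), ENNReal.ofReal (Fg a b x) := by
    rw [setLIntegral_congr_fun_ae measurableSet_Ioi (Filter.Eventually.of_forall hpt)]
    exact lintegral_const_mul 2 (measurable_Fg a b)
  have h2 : (2:ENNReal) * Kg a1 b1 = 2 * Kg a b := by
    rw [Kg, Kg, ← heven, hcv, hrhs]
  exact (ENNReal.mul_right_inj (by norm_num) (by norm_num)).mp h2

lemma Kg_init : Kg (Real.sqrt 2) 1
    = ∫⁻ t in Ioo (0:ℝ) 1, ENNReal.ofReal (1 / Real.sqrt (1 - t^4)) := by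
  set f : ℝ → ℝ := fun x => 1 / Real.sqrt (1 + x^2) with hf
  set f' : ℝ → ℝ := fun x => -(x / ((1+x^2) * Real.sqrt (1+x^2))) with hf'
  have hT2 : ∀ x : ℝ, (Real.sqrt (1+x^2))^2 = 1+x^2 :=
    fun x => Real.sq_sqrt (by positivity)
  have hTpos : ∀ x : ℝ, 0 < Real.sqrt (1+x^2) :=
    fun x => Real.sqrt_pos.mpr (by positivity)
  have hder : ∀ x ∈ Ioi (0:ℝ), HasDerivWithinAt f (f' x) (Ioi 0) x := by
    intro x _
    have h1 : HasDerivAt (fun y : ℝ => 1 + y^2) (2*x) x := by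
      simpa using ((hasDerivAt_pow 2 x).const_add 1)
    have h2 : HasDerivAt (fun y : ℝ => Real.sqrt (1 + y^2))
        (1 / (2 * Real.sqrt (1+x^2)) * (2*x)) x :=
      (Real.hasDerivAt_sqrt (by positivity)).comp x h1
    have h3 := (h2.inv (ne_of_gt (hTpos x))).hasDerivWithinAt (s := Ioi 0)
    rw [show f = (fun y => Real.sqrt (1 + y ^ 2))⁻¹ by funext y; simp [hf, one_div]]
    refine h3.congr_deriv ?_
    · rw [hf', hT2 x]
      field_simp
  have hinj : InjOn f (Ioi (0:ℝ)) := by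
    intro x hx y hy hxy
    simp only [mem_Ioi] at hx hy
    simp only [hf, one_div] at hxy
    have h1 : Real.sqrt (1+x^2) = Real.sqrt (1+y^2) := by
      have := congrArg (fun z : ℝ => z⁻¹) hxy
      simpa [inv_inv] using this
    have h2 : 1 + x^2 = 1 + y^2 :=
      (Real.sqrt_inj (by positivity) (by positivity)).mp h1
    have h3 : (x - y) * (x + y) = 0 := by linear_combination h2
    rcases mul_eq_zero.mp h3 with h | h
    · linarith
    · linarith
  have himg : f '' Ioi (0:ℝ) = Ioo 0 1 := by
    apply subset_antisymm
    · rintro _ ⟨x, hx, rfl⟩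
      simp only [mem_Ioi] at hx
      constructor
      · simp only [hf]; positivity
      · simp only [hf]
        rw [div_lt_one (hTpos x)]
        calc (1:ℝ) = Real.sqrt 1 := Real.sqrt_one.symm
          _ < Real.sqrt (1+x^2) := Real.sqrt_lt_sqrt (by norm_num) (by nlinarith)
    · rintro t ⟨ht0, ht1⟩
      have ht2 : 0 < 1 - t^2 := by nlinarith
      refine ⟨Real.sqrt (1 - t^2) / t, ?_, ?_⟩
      · exact div_pos (Real.sqrt_pos.mpr ht2) ht0
      · simp only [hf]
        have h1 : 1 + (Real.sqrt (1 - t^2) / t)^2 = (1/t)^2 := by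
          rw [div_pow, Real.sq_sqrt ht2.le]
          field_simp
          ring
        rw [h1, Real.sqrt_sq (by positivity)]
        field_simp
  have hcv := lintegral_image_deriv measurableSet_Ioi hder hinj
      (fun t => ENNReal.ofReal (1 / Real.sqrt (1 - t^4)))
  rw [himg] at hcv
  rw [hcv, Kg]
  apply setLIntegral_congr_fun_ae measurableSet_Ioi
  filter_upwards with x hx
  simp only [mem_Ioi] at hx
  have hr2 : (Real.sqrt (x^2+2))^2 = x^2+2 := Real.sq_sqrt (by positivity)
  have hrpos : 0 < Real.sqrt (x^2+2) := Real.sqrt_pos.mpr (by positivity)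
  have habs : |f' x| = x / ((1+x^2) * Real.sqrt (1+x^2)) := by
    rw [hf', abs_neg, abs_of_pos (by positivity)]
  have hfx4 : 1 - f x ^ 4 = (x * Real.sqrt (x^2+2) / (1+x^2))^2 := by
    simp only [hf, div_pow, one_pow]
    rw [show (Real.sqrt (1+x^2))^4 = ((Real.sqrt (1+x^2))^2)^2 by ring, hT2 x, mul_pow, hr2]
    field_simp
    ring
  have hsq : Real.sqrt (1 - f x ^ 4) = x * Real.sqrt (x^2+2) / (1+x^2) := by
    rw [hfx4, Real.sqrt_sq (by positivity)]
  have hFg : Fg (Real.sqrt 2) 1 x = 1 / (Real.sqrt (1+x^2) * Real.sqrt (x^2+2)) := by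
    rw [Fg, Real.sq_sqrt (by norm_num : (0:ℝ) ≤ 2), one_pow,
      Real.sqrt_mul (by positivity) _]
    rw [show x^2 + 1 = 1 + x^2 by ring, show Real.sqrt (x^2+2) * Real.sqrt (1+x^2)
      = Real.sqrt (1+x^2) * Real.sqrt (x^2+2) by ring]
  rw [habs, hsq, hFg, ← ENNReal.ofReal_mul (by positivity)]
  congr 1
  field_simp

/-- Gauss's theorem on the lemniscate: the quarter-arclength integral
`∫₀¹ dt/√(1 − t⁴)` equals `π/(2·M(1, √2))`, where `M(1, √2)` is the
arithmetic–geometric mean of `1` and `√2`. -/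
theorem gauss_lemniscate (P Q : ℕ → ℝ)
    (hP0 : P 0 = Real.sqrt 2) (hQ0 : Q 0 = 1)
    (hP : ∀ n, P (n + 1) = (P n + Q n) / 2)
    (hQ : ∀ n, Q (n + 1) = Real.sqrt (P n * Q n))
    (M : ℝ) (hM : Tendsto P atTop (nhds M)) (hM' : Tendsto Q atTop (nhds M)) :
    ∫ t in (0:ℝ)..1, 1 / Real.sqrt (1 - t ^ 4) = Real.pi / (2 * M) := by
  have sqrt2_ge_one : (1:ℝ) ≤ Real.sqrt 2 := by
    rw [show (1:ℝ) = Real.sqrt 1 from Real.sqrt_one.symm]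
    exact Real.sqrt_le_sqrt (by norm_num)
  have hpos : ∀ n, 0 < Q n ∧ Q n ≤ P n := by
    intro n; induction n with
    | zero => rw [hP0, hQ0]; exact ⟨one_pos, sqrt2_ge_one⟩
    | succ n ih =>
      obtain ⟨hq, hqp⟩ := ih
      have hp : 0 < P n := lt_of_lt_of_le hq hqp
      refine ⟨?_, ?_⟩
      · rw [hQ]; exact Real.sqrt_pos.mpr (mul_pos hp hq)
      · rw [hQ, hP]
        have h := Real.sqrt_le_sqrt (show P n * Q n ≤ ((P n + Q n)/2)^2 by nlinarith [sq_nonneg (P n - Q n)])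
        rwa [Real.sqrt_sq (by linarith)] at h
  have hQ1 : ∀ n, 1 ≤ Q n := by
    intro n; induction n with
    | zero => rw [hQ0]
    | succ n ih =>
      obtain ⟨hq, hqp⟩ := hpos n
      rw [hQ]
      calc (1:ℝ) ≤ Q n := ih
        _ = Real.sqrt (Q n * Q n) := (Real.sqrt_mul_self hq.le).symm
        _ ≤ Real.sqrt (P n * Q n) := Real.sqrt_le_sqrt (by nlinarith)
  have hM1 : 1 ≤ M := ge_of_tendsto' hM' hQ1
  have hM0 : 0 < M := lt_of_lt_of_le one_pos hM1
  have hKconst : ∀ n, Kg (P n) (Q n) = Kg (Real.sqrt 2) 1 := by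
    intro n; induction n with
    | zero => rw [hP0, hQ0]
    | succ n ih =>
      obtain ⟨hq, hqp⟩ := hpos n
      have hp : 0 < P n := lt_of_lt_of_le hq hqp
      rw [hP, hQ, Kg_step (P n) (Q n) hp hq, ih]
  set K := Kg (Real.sqrt 2) 1 with hK
  have hKtop : K ≠ ⊤ :=
    ne_top_of_le_ne_top ENNReal.ofReal_ne_top (Kg_le _ _ one_pos sqrt2_ge_one)
  have hub : ∀ n, K.toReal ≤ Real.pi / (2 * Q n) := by
    intro n
    obtain ⟨hq, hqp⟩ := hpos n
    refine ENNReal.toReal_le_of_le_ofReal (by positivity) ?_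
    rw [← hKconst n]
    exact Kg_le _ _ hq hqp
  have hlb : ∀ n, Real.pi / (2 * P n) ≤ K.toReal := by
    intro n
    obtain ⟨hq, hqp⟩ := hpos n
    have h := le_Kg (P n) (Q n) hq hqp
    rw [hKconst n] at h
    exact (ENNReal.ofReal_le_iff_le_toReal hKtop).mp h
  have hlim1 : Tendsto (fun n => Real.pi / (2 * P n)) atTop (nhds (Real.pi / (2 * M))) :=
    tendsto_const_nhds.div (hM.const_mul 2) (by positivity)
  have hlim2 : Tendsto (fun n => Real.pi / (2 * Q n)) atTop (nhds (Real.pi / (2 * M))) :=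
    tendsto_const_nhds.div (hM'.const_mul 2) (by positivity)
  have hkeq : K.toReal = Real.pi / (2 * M) := by
    refine le_antisymm ?_ ?_
    · exact ge_of_tendsto hlim2 (Filter.Eventually.of_forall hub)
    · exact le_of_tendsto hlim1 (Filter.Eventually.of_forall hlb)
  rw [intervalIntegral.integral_of_le zero_le_one, MeasureTheory.integral_Ioc_eq_integral_Ioo]
  rw [MeasureTheory.integral_eq_lintegral_of_nonneg_ae (f := fun t => 1 / Real.sqrt (1 - t ^ 4))
    (Filter.Eventually.of_forall fun t => by positivity)
    ((measurable_const.div (((measurable_id'.pow_const 4).const_sub 1).sqrt)).aestronglyMeasurable)]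
  rw [← hkeq, hK, Kg_init]
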